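/- Fix k ≥ 2 and β ∈ [0, ∞), and define g(x₁,…,x_k) = (e^{-β}·∏_{i=1}^k (1 - tanh x_i)/2) / (1 - (1 - e^{-β})·∏_{i=1}^k (1 - tanh x_i)/2). Then 0 ≤ g ≤ 1 and g is monotonically decreasing in each argument; moreover -1 ≤ ∂g/∂x_i ≤ 0 for each i. -/

import Mathlib

open Real Finset

lemma my_tanh_lt_one (y : ℝ) : Real.tanh y < 1 := by
  rw [Real.tanh_eq_sinh_div_cosh, div_lt_one (Real.cosh_pos y)]
  nlinarith [Real.cosh_sub_sinh y, Real.exp_pos (-y)]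

lemma my_neg_one_lt_tanh (y : ℝ) : -1 < Real.tanh y := by
  rw [Real.tanh_eq_sinh_div_cosh, lt_div_iff₀ (Real.cosh_pos y)]
  nlinarith [Real.cosh_add_sinh y, Real.exp_pos y]

lemma my_tanh_monotone : Monotone Real.tanh := by
  intro s t hst
  rw [Real.tanh_eq_sinh_div_cosh, Real.tanh_eq_sinh_div_cosh,
    div_le_div_iff₀ (Real.cosh_pos s) (Real.cosh_pos t)]
  have h1 : Real.sinh (t - s) = Real.sinh t * Real.cosh s - Real.cosh t * Real.sinh s :=
    Real.sinh_sub t s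
  have h2 : 0 ≤ Real.sinh (t - s) := by
    have : Monotone Real.sinh := Real.sinh_strictMono.monotone
    have := this (by linarith : (0:ℝ) ≤ t - s)
    simpa using this
  linarith

lemma my_hasDerivAt_tanh (y : ℝ) : HasDerivAt Real.tanh (1 - Real.tanh y ^ 2) y := by
  have hc := Real.cosh_pos y
  have h := (Real.hasDerivAt_sinh y).div (Real.hasDerivAt_cosh y) (ne_of_gt hc)
  have hfun : Real.tanh = fun x => Real.sinh x / Real.cosh x :=
    funext fun x => Real.tanh_eq_sinh_div_cosh x
  have hsq : Real.cosh y ^ 2 - Real.sinh y ^ 2 = 1 := Real.cosh_sq_sub_sinh_sq y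
  have h2 : HasDerivAt (fun x => Real.sinh x / Real.cosh x) (1 - Real.tanh y ^ 2) y := by
    refine HasDerivAt.congr_deriv h ?_
    symm
    rw [Real.tanh_eq_sinh_div_cosh]
    field_simp
  simp only [← hfun] at h2
  exact h2

lemma my_hmono (a P1 P2 : ℝ) (ha : 0 < a) (ha1 : a ≤ 1) (h1 : 0 ≤ P1) (h12 : P1 ≤ P2)
    (h2 : P2 ≤ 1) : a * P1 / (1 - (1 - a) * P1) ≤ a * P2 / (1 - (1 - a) * P2) := by
  have hD1 : 0 < 1 - (1 - a) * P1 := by nlinarith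
  have hD2 : 0 < 1 - (1 - a) * P2 := by nlinarith
  rw [div_le_div_iff₀ hD1 hD2]
  nlinarith

lemma my_key_ineq (a c v : ℝ) (ha : 0 < a) (ha1 : a ≤ 1) (hc0 : 0 < c) (hc1 : c ≤ 1)
    (hv1 : -1 < v) (hv2 : v < 1) :
    a * c * (1 - v ^ 2) / 2 ≤ (1 - (1 - a) * ((1 - v) / 2 * c)) ^ 2 := by
  set w := (1 - v) / 2 * c with hw
  have hw0 : 0 < w := mul_pos (by linarith) hc0
  have hwU : w ≤ (1 - v) / 2 := by nlinarith
  have hU1 : (1 - v) / 2 < 1 := by linarith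
  nlinarith [sq_nonneg (1 - w - a * w), mul_nonneg (mul_nonneg ha.le hw0.le)
    (sub_nonneg.mpr hwU), mul_pos ha hw0, sq_nonneg (1 - w)]

theorem clause_energy_g_props (k : ℕ) (hk : 2 ≤ k) (β : ℝ) (hβ : 0 ≤ β)
    (g : (Fin k → ℝ) → ℝ)
    (hg : ∀ x, g x =
      (Real.exp (-β) * ∏ i, (1 - Real.tanh (x i)) / 2) /
      (1 - (1 - Real.exp (-β)) * ∏ i, (1 - Real.tanh (x i)) / 2)) :
    (∀ x, 0 ≤ g x ∧ g x ≤ 1) ∧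
    (∀ (x : Fin k → ℝ) (i : Fin k) (s t : ℝ), s ≤ t →
      g (Function.update x i t) ≤ g (Function.update x i s)) ∧
    (∀ (x : Fin k → ℝ) (i : Fin k),
      -1 ≤ deriv (fun t => g (Function.update x i t)) (x i) ∧
      deriv (fun t => g (Function.update x i t)) (x i) ≤ 0) := by
  set a : ℝ := Real.exp (-β) with haDef
  have ha : 0 < a := Real.exp_pos _
  have ha1 : a ≤ 1 := Real.exp_le_one_iff.mpr (by linarith)
  have hfac : ∀ y : ℝ, 0 < (1 - Real.tanh y) / 2 ∧ (1 - Real.tanh y) / 2 < 1 := by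
    intro y
    constructor
    · linarith [my_tanh_lt_one y]
    · linarith [my_neg_one_lt_tanh y]
  -- product bounds for any x
  have hProd : ∀ x : Fin k → ℝ, 0 < (∏ i, (1 - Real.tanh (x i)) / 2) ∧
      (∏ i, (1 - Real.tanh (x i)) / 2) ≤ 1 := by
    intro x
    constructor
    · exact Finset.prod_pos fun i _ => (hfac (x i)).1
    · refine Finset.prod_le_one (fun i _ => (hfac (x i)).1.le) (fun i _ => (hfac (x i)).2.le)
  -- key product decomposition
  have hsplit : ∀ (x : Fin k → ℝ) (i : Fin k) (t : ℝ),
      (∏ j, (1 - Real.tanh (Function.update x i t j)) / 2) =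
      ((1 - Real.tanh t) / 2) * ∏ j ∈ Finset.univ.erase i, (1 - Real.tanh (x j)) / 2 := by
    intro x i t
    rw [← Finset.mul_prod_erase Finset.univ _ (Finset.mem_univ i)]
    congr 1
    · rw [Function.update_self]
    · exact Finset.prod_congr rfl fun j hj => by
        rw [Function.update_of_ne (Finset.mem_erase.mp hj).1]
  refine ⟨?_, ?_, ?_⟩
  · -- bounds
    intro x
    obtain ⟨hP0, hP1⟩ := hProd x
    set P := ∏ i, (1 - Real.tanh (x i)) / 2 with hP
    have hD : 0 < 1 - (1 - a) * P := by nlinarith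
    rw [hg]
    constructor
    · positivity
    · rw [div_le_one hD]; nlinarith
  · -- monotonicity
    intro x i s t hst
    rw [hg, hg, hsplit, hsplit]
    set c := ∏ j ∈ Finset.univ.erase i, (1 - Real.tanh (x j)) / 2 with hc
    have hc0 : 0 < c := Finset.prod_pos fun j _ => (hfac (x j)).1
    have hc1 : c ≤ 1 := Finset.prod_le_one (fun j _ => (hfac (x j)).1.le)
      (fun j _ => (hfac (x j)).2.le)
    have hts : Real.tanh s ≤ Real.tanh t := my_tanh_monotone hst
    have h1 := hfac t
    have h2 := hfac s
    refine my_hmono a _ _ ha ha1 (mul_pos (hfac t).1 hc0).le ?_ ?_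
    · nlinarith
    · nlinarith
  · -- derivative bounds
    intro x i
    set c := ∏ j ∈ Finset.univ.erase i, (1 - Real.tanh (x j)) / 2 with hc
    have hc0 : 0 < c := Finset.prod_pos fun j _ => (hfac (x j)).1
    have hc1 : c ≤ 1 := Finset.prod_le_one (fun j _ => (hfac (x j)).1.le)
      (fun j _ => (hfac (x j)).2.le)
    set t0 := x i with ht0
    set v := Real.tanh t0 with hv
    have hv1 : -1 < v := my_neg_one_lt_tanh t0
    have hv2 : v < 1 := my_tanh_lt_one t0
    -- the function equals φ
    have hfun : (fun t => g (Function.update x i t)) =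
        fun t => a * ((1 - Real.tanh t) / 2 * c) /
          (1 - (1 - a) * ((1 - Real.tanh t) / 2 * c)) := by
      funext t
      rw [hg, hsplit]
    set U := (1 - v) / 2 with hU
    have hU0 : 0 < U := (hfac t0).1
    have hU1 : U < 1 := (hfac t0).2
    have hUc0 : 0 < U * c := mul_pos hU0 hc0
    have hUc1 : U * c ≤ 1 := by nlinarith
    have hDd : 0 < 1 - (1 - a) * (U * c) := by nlinarith [mul_le_of_le_one_right (by linarith : (0:ℝ) ≤ 1 - a) hUc1]
    -- derivative of numerator and denominator
    have hdt : HasDerivAt (fun t => (1 - Real.tanh t) / 2 * c)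
        (-(1 - v ^ 2) / 2 * c) t0 := by
      have := ((my_hasDerivAt_tanh t0).const_sub 1).div_const 2
      have := this.mul_const c
      convert this using 1
    have hnum : HasDerivAt (fun t => a * ((1 - Real.tanh t) / 2 * c))
        (a * (-(1 - v ^ 2) / 2 * c)) t0 := hdt.const_mul a
    have hden : HasDerivAt (fun t => 1 - (1 - a) * ((1 - Real.tanh t) / 2 * c))
        (-((1 - a) * (-(1 - v ^ 2) / 2 * c))) t0 := (hdt.const_mul (1 - a)).const_sub 1
    have hdiv := hnum.div hden (by
      show (1 - (1 - a) * ((1 - Real.tanh t0) / 2 * c)) ≠ 0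
      rw [← hv, ← hU]; exact ne_of_gt hDd)
    have hderiv : HasDerivAt (fun t => g (Function.update x i t))
        (a * (-(1 - v ^ 2) / 2 * c) / (1 - (1 - a) * (U * c)) ^ 2) t0 := by
      rw [hfun]
      refine HasDerivAt.congr_deriv hdiv ?_
      symm
      rw [← hv, hU]
      ring
    rw [ht0] at hderiv ⊢
    rw [hderiv.deriv]
    constructor
    · rw [neg_le, ← neg_div, div_le_one (pow_pos hDd 2)]
      have := my_key_ineq a c v ha ha1 hc0 hc1 hv1 hv2
      rw [hU]
      nlinarith [this]
    · apply div_nonpos_of_nonpos_of_nonneg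
      · have hvsq : 0 < 1 - v ^ 2 := by nlinarith
        nlinarith [mul_pos (mul_pos ha hvsq) hc0]
      · positivity
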